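/- Let u < v ≤ w be natural numbers, and set B = 2^u, k = 2^{v−u}, and L = 2^w (so k divides L since v − u ≤ w). Let i and j be integers with 1 ≤ i ≤ k and 1 ≤ j ≤ k, and let a₁ and a₂ be arbitrary integers. If (i·B + a₁)·k + j ≡ (j·B + a₂)·k + i (mod L), then i = j. -/
import Mathlib


/-- The key congruence in the multi-level matrix-transpose algorithm.  Let `u < v ≤ w`
be naturals and set `B = 2^u`, `k = 2^(v-u)`, `L = 2^w` (so `k ∣ L`).  If `1 ≤ i ≤ k`,
`1 ≤ j ≤ k` and, for some integers `a₁, a₂`,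
`(i·B + a₁)·k + j ≡ (j·B + a₂)·k + i (mod L)`, then `i = j`; i.e. the symmetric
submatrices `S_{i,j}` and `S_{j,i}` with `i ≠ j` never conflict in the direct-mapped
cache with `L` lines. -/
theorem symmetric_submatrices_no_conflict (u v w : ℕ) (huv : u < v) (hvw : v ≤ w)
    (i j a₁ a₂ : ℤ) (hi1 : 1 ≤ i) (hik : i ≤ 2 ^ (v - u))
    (hj1 : 1 ≤ j) (hjk : j ≤ 2 ^ (v - u))
    (h : (i * 2 ^ u + a₁) * 2 ^ (v - u) + j
          ≡ (j * 2 ^ u + a₂) * 2 ^ (v - u) + i [ZMOD (2 ^ w)]) :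
    i = j := by
  have hk : ((2:ℤ)^(v-u)) ∣ 2^w := pow_dvd_pow _ (by omega)
  have h2 := (h.of_dvd hk).dvd
  have hdvd : ((2:ℤ)^(v-u)) ∣ (i - j) := by
    have : ((j * 2 ^ u + a₂) * 2 ^ (v - u) + i) - ((i * 2 ^ u + a₁) * 2 ^ (v - u) + j)
        = (j * 2 ^ u + a₂ - (i * 2 ^ u + a₁)) * 2 ^ (v - u) + (i - j) := by ring
    rw [this] at h2
    exact (dvd_add_right (dvd_mul_left _ _)).mp h2
  have : i - j = 0 := Int.eq_zero_of_abs_lt_dvd hdvd (by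
    have := abs_lt.mpr (⟨by omega, by omega⟩ : -(2^(v-u)) < i - j ∧ i - j < 2^(v-u))
    exact this)
  omega
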